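/- No four points of the quantal-response curve are coplanar: for every λ > 0 and all reals 0 ≤ a < b < c < d ≤ 1, the determinant of the 4×4 matrix whose rows are (1, s, ψ_λ(s), s·ψ_λ(s)) for s = a, b, c, d (in this order) is strictly positive. In particular, the four points v(a), v(b), v(c), v(d) on the curve C = {(s, ψ_λ(s), s·ψ_λ(s)) : s ∈ [0,1]} do not lie in a common plane of ℝ³. -/

import Mathlib

open Real

/-- Quantal response function `ψ_λ(p) = 1/(1 + exp(2λ(1−2p)))`. -/
noncomputable def psi (lam p : ℝ) : ℝ := 1 / (1 + Real.exp (2 * lam * (1 - 2 * p)))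

/-- The curve point `v(s) = (s, ψ_λ(s), s·ψ_λ(s)) ∈ ℝ³`. -/
noncomputable def vpoint (lam s : ℝ) : ℝ × ℝ × ℝ := (s, psi lam s, s * psi lam s)


lemma sinh_le_mul_cosh {t : ℝ} (ht : 0 ≤ t) : Real.sinh t ≤ t * Real.cosh t := by
  have hd : ∀ u : ℝ, HasDerivAt (fun u : ℝ => u * Real.cosh u - Real.sinh u)
      (u * Real.sinh u) u := by
    intro u
    have h1 := (hasDerivAt_id u).mul (Real.hasDerivAt_cosh u)
    have h2 := (h1.sub (Real.hasDerivAt_sinh u))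
    exact h2.congr_deriv (by simp only [one_mul, id]; ring)
  have hmono : MonotoneOn (fun u : ℝ => u * Real.cosh u - Real.sinh u) (Set.Ici 0) := by
    apply monotoneOn_of_deriv_nonneg (convex_Ici 0)
    · exact (Continuous.continuousOn (by continuity))
    · intro u hu; exact (hd u).differentiableAt.differentiableWithinAt
    · intro u hu
      rw [(hd u).deriv]
      simp only [interior_Ici, Set.mem_Ioi] at hu
      exact mul_nonneg hu.le (le_of_lt (Real.sinh_pos_iff.2 hu))
  have := hmono (Set.self_mem_Ici) (Set.mem_Ici.2 ht) ht
  simp at this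
  linarith

lemma sinh_div_mono {s t : ℝ} (hs : 0 < s) (hst : s ≤ t) :
    t * Real.sinh s ≤ s * Real.sinh t := by
  have hd : ∀ u : ℝ, u ≠ 0 → HasDerivAt (fun u : ℝ => Real.sinh u / u)
      ((Real.cosh u * u - Real.sinh u * 1) / u ^ 2) u := fun u hu =>
    (Real.hasDerivAt_sinh u).div (hasDerivAt_id u) hu
  have hmono : MonotoneOn (fun u : ℝ => Real.sinh u / u) (Set.Ioi 0) := by
    apply monotoneOn_of_deriv_nonneg (convex_Ioi 0)
    · apply ContinuousOn.div Real.continuous_sinh.continuousOn continuousOn_id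
      intro u hu; exact ne_of_gt hu
    · intro u hu
      rw [interior_Ioi] at hu
      exact (hd u (ne_of_gt hu)).differentiableAt.differentiableWithinAt
    · intro u hu
      rw [interior_Ioi] at hu
      rw [(hd u (ne_of_gt hu)).deriv]
      have h1 := sinh_le_mul_cosh (le_of_lt hu)
      apply div_nonneg (by nlinarith) (sq_nonneg u)
  have ht : 0 < t := lt_of_lt_of_le hs hst
  have := hmono (Set.mem_Ioi.2 hs) (Set.mem_Ioi.2 ht) hst
  rw [div_le_div_iff₀ hs ht] at this
  linarith

lemma core_ineq {x y z : ℝ} (hx : 0 < x) (hy : 0 < y) (hz : 0 < z) :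
    y * (x + y + z) * Real.sinh x * Real.sinh z
      < x * z * Real.sinh (x + y + z) * Real.sinh y := by
  have hsx := Real.sinh_pos_iff.2 hx
  have hsz := Real.sinh_pos_iff.2 hz
  have hsy := Real.self_lt_sinh_iff.2 hy
  have hS : 0 < x + y + z := by linarith
  have hsS := Real.sinh_pos_iff.2 hS
  have h1 : (x + z) * Real.sinh x * Real.sinh z ≤ x * z * Real.sinh (x + z) := by
    have hcx := sinh_le_mul_cosh hx.le
    have hcz := sinh_le_mul_cosh hz.le
    rw [Real.sinh_add]
    have e1 : x * Real.sinh x * Real.sinh z ≤ x * Real.sinh x * (z * Real.cosh z) :=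
      mul_le_mul_of_nonneg_left hcz (by positivity)
    have e2 : z * Real.sinh z * Real.sinh x ≤ z * Real.sinh z * (x * Real.cosh x) :=
      mul_le_mul_of_nonneg_left hcx (by positivity)
    nlinarith [e1, e2]
  have h2 : (x + y + z) * Real.sinh (x + z) ≤ (x + z) * Real.sinh (x + y + z) :=
    sinh_div_mono (by linarith) (by linarith)
  have h3 : (x + y + z) * (Real.sinh x * Real.sinh z) ≤ x * z * Real.sinh (x + y + z) := by
    have hxz : 0 < x + z := by linarith
    have e1 := mul_le_mul_of_nonneg_left h1 hS.le
    have e2 := mul_le_mul_of_nonneg_left h2 (mul_pos hx hz).le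
    nlinarith [e1, e2, hxz]
  have e1 := mul_le_mul_of_nonneg_left h3 hy.le
  have e2 := mul_lt_mul_of_pos_left hsy (mul_pos (mul_pos hx hz) hsS)
  nlinarith [e1, e2]


lemma det4_expand (a b c d A B C D r1 r2 r3 r4 : ℝ) :
    Matrix.det !![r1, a, A, a * A;
                  r2, b, B, b * B;
                  r3, c, C, c * C;
                  r4, d, D, d * D]
    = r1 * (b * (C * (d*D) - D * (c*C)) - B * (c * (d*D) - d * (c*C)) + (b*B) * (c * D - d * C))
    - a * (r2 * (C * (d*D) - D * (c*C)) - B * (r3 * (d*D) - r4 * (c*C)) + (b*B) * (r3 * D - r4 * C))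
    + A * (r2 * (c * (d*D) - d * (c*C)) - b * (r3 * (d*D) - r4 * (c*C)) + (b*B) * (r3 * d - r4 * c))
    - (a*A) * (r2 * (c * D - d * C) - b * (r3 * D - r4 * C) + B * (r3 * d - r4 * c)) := by
  rw [Matrix.det_succ_row_zero]
  simp [Fin.sum_univ_succ, Matrix.det_fin_three,
    show (Fin.succAbove (1:Fin 4) (2:Fin 3)) = 3 by decide,
    show (Fin.succAbove (2:Fin 4) (2:Fin 3)) = 3 by decide,
    show (Fin.castSucc (2:Fin 3)) = (2:Fin 4) by decide,
    show (Fin.succAbove (3:Fin 4) (2:Fin 3)) = 2 by decide]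
  ring

lemma det_poly (a b c d p q r s : ℝ) :
    Matrix.det !![1, a, p, a * p;
                  1, b, q, b * q;
                  1, c, r, c * r;
                  1, d, s, d * s]
    = (b-a)*(d-c)*(p-s)*(q-r) - (c-b)*(d-a)*(p-q)*(r-s) := by
  rw [det4_expand]; ring

set_option maxHeartbeats 1600000 in
lemma frac_identity (a b c d A B C D : ℝ) (hA : 1+A ≠ 0) (hB : 1+B ≠ 0)
    (hC : 1+C ≠ 0) (hD : 1+D ≠ 0) :
    (b-a)*(d-c)*(1/(1+A) - 1/(1+D))*(1/(1+B) - 1/(1+C))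
      - (c-b)*(d-a)*(1/(1+A) - 1/(1+B))*(1/(1+C) - 1/(1+D))
    = ((b-a)*(d-c)*(D-A)*(C-B) - (c-b)*(d-a)*(B-A)*(D-C))
        / ((1+A)*(1+B)*(1+C)*(1+D)) := by
  field_simp
  ring


lemma exp_sub_exp (u v : ℝ) :
    Real.exp u - Real.exp v = 2 * Real.exp ((u+v)/2) * Real.sinh ((u-v)/2) := by
  have h1 : rexp ((u+v)/2) * rexp ((u-v)/2) = rexp u := by rw [← Real.exp_add]; congr 1; ring
  have h2 : rexp ((u+v)/2) * rexp ((v-u)/2) = rexp v := by rw [← Real.exp_add]; congr 1; ring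
  rw [Real.sinh_eq]
  field_simp
  rw [show -((u - v) / 2) = (v - u) / 2 by ring]
  linear_combination h2 - h1

lemma core_scaled {lam p q r : ℝ} (hlam : 0 < lam) (hp : 0 < p) (hq : 0 < q) (hr : 0 < r) :
    q*(p+q+r)*Real.sinh (2*lam*p)*Real.sinh (2*lam*r)
      < p*r*Real.sinh (2*lam*(p+q+r))*Real.sinh (2*lam*q) := by
  have hx : 0 < 2*lam*p := by positivity
  have hy : 0 < 2*lam*q := by positivity
  have hz : 0 < 2*lam*r := by positivity
  have h := core_ineq hx hy hz
  rw [show 2*lam*p + 2*lam*q + 2*lam*r = 2*lam*(p+q+r) from by ring] at h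
  have e1 : 2*lam*q * (2*lam*(p+q+r)) * Real.sinh (2*lam*p) * Real.sinh (2*lam*r)
      = (4*(lam*lam)) * (q*(p+q+r)*Real.sinh (2*lam*p)*Real.sinh (2*lam*r)) := by ring
  have e2 : 2*lam*p * (2*lam*r) * Real.sinh (2*lam*(p+q+r)) * Real.sinh (2*lam*q)
      = (4*(lam*lam)) * (p*r*Real.sinh (2*lam*(p+q+r))*Real.sinh (2*lam*q)) := by ring
  rw [e1, e2] at h
  exact lt_of_mul_lt_mul_left h (by positivity)


theorem no_four_points_coplanar (lam : ℝ) (hlam : 0 < lam) (a b c d : ℝ)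
    (ha : 0 ≤ a) (hab : a < b) (hbc : b < c) (hcd : c < d) (hd : d ≤ 1) :
    0 < Matrix.det !![1, a, psi lam a, a * psi lam a;
                      1, b, psi lam b, b * psi lam b;
                      1, c, psi lam c, c * psi lam c;
                      1, d, psi lam d, d * psi lam d] ∧
      AffineIndependent ℝ ![vpoint lam a, vpoint lam b, vpoint lam c, vpoint lam d] := by
  set E1 := Real.exp (2 * lam * (1 - 2 * a)) with hE1def
  set E2 := Real.exp (2 * lam * (1 - 2 * b)) with hE2def
  set E3 := Real.exp (2 * lam * (1 - 2 * c)) with hE3def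
  set E4 := Real.exp (2 * lam * (1 - 2 * d)) with hE4def
  have hp1 : (0:ℝ) < E1 := Real.exp_pos _
  have hp2 : (0:ℝ) < E2 := Real.exp_pos _
  have hp3 : (0:ℝ) < E3 := Real.exp_pos _
  have hp4 : (0:ℝ) < E4 := Real.exp_pos _
  have h1 : (1:ℝ) + E1 ≠ 0 := by positivity
  have h2 : (1:ℝ) + E2 ≠ 0 := by positivity
  have h3 : (1:ℝ) + E3 ≠ 0 := by positivity
  have h4 : (1:ℝ) + E4 ≠ 0 := by positivity
  have hpsia : psi lam a = 1 / (1 + E1) := rfl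
  have hpsib : psi lam b = 1 / (1 + E2) := rfl
  have hpsic : psi lam c = 1 / (1 + E3) := rfl
  have hpsid : psi lam d = 1 / (1 + E4) := rfl
  -- the determinant as a quotient
  have hdet : Matrix.det !![1, a, psi lam a, a * psi lam a;
                      1, b, psi lam b, b * psi lam b;
                      1, c, psi lam c, c * psi lam c;
                      1, d, psi lam d, d * psi lam d]
      = ((b-a)*(d-c)*(E4-E1)*(E3-E2) - (c-b)*(d-a)*(E2-E1)*(E4-E3))
          / ((1+E1)*(1+E2)*(1+E3)*(1+E4)) := by
    rw [hpsia, hpsib, hpsic, hpsid, det_poly,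
      show (1:ℝ)/(1+E1) = 1/(1+E1) from rfl]
    exact frac_identity a b c d E1 E2 E3 E4 h1 h2 h3 h4
  -- sinh factorization of the numerator
  have h14 : E1 - E4 = 2 * Real.exp (2*lam*(1-a-d)) * Real.sinh (2*lam*(d-a)) := by
    rw [hE1def, hE4def, exp_sub_exp,
      show ((2*lam*(1-2*a)) + (2*lam*(1-2*d)))/2 = 2*lam*(1-a-d) from by ring,
      show ((2*lam*(1-2*a)) - (2*lam*(1-2*d)))/2 = 2*lam*(d-a) from by ring]
  have h23 : E2 - E3 = 2 * Real.exp (2*lam*(1-b-c)) * Real.sinh (2*lam*(c-b)) := by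
    rw [hE2def, hE3def, exp_sub_exp,
      show ((2*lam*(1-2*b)) + (2*lam*(1-2*c)))/2 = 2*lam*(1-b-c) from by ring,
      show ((2*lam*(1-2*b)) - (2*lam*(1-2*c)))/2 = 2*lam*(c-b) from by ring]
  have h12 : E1 - E2 = 2 * Real.exp (2*lam*(1-a-b)) * Real.sinh (2*lam*(b-a)) := by
    rw [hE1def, hE2def, exp_sub_exp,
      show ((2*lam*(1-2*a)) + (2*lam*(1-2*b)))/2 = 2*lam*(1-a-b) from by ring,
      show ((2*lam*(1-2*a)) - (2*lam*(1-2*b)))/2 = 2*lam*(b-a) from by ring]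
  have h34 : E3 - E4 = 2 * Real.exp (2*lam*(1-c-d)) * Real.sinh (2*lam*(d-c)) := by
    rw [hE3def, hE4def, exp_sub_exp,
      show ((2*lam*(1-2*c)) + (2*lam*(1-2*d)))/2 = 2*lam*(1-c-d) from by ring,
      show ((2*lam*(1-2*c)) - (2*lam*(1-2*d)))/2 = 2*lam*(d-c) from by ring]
  have hG : Real.exp (2*lam*(1-a-b)) * Real.exp (2*lam*(1-c-d))
      = Real.exp (2*lam*(1-a-d)) * Real.exp (2*lam*(1-b-c)) := by
    rw [← Real.exp_add, ← Real.exp_add]; congr 1; ring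
  have hfac : (b-a)*(d-c)*(E4-E1)*(E3-E2) - (c-b)*(d-a)*(E2-E1)*(E4-E3)
      = Real.exp (2*lam*(1-a-d)) * Real.exp (2*lam*(1-b-c)) *
        (4*((b-a)*(d-c)*Real.sinh (2*lam*(d-a))*Real.sinh (2*lam*(c-b)))
          - 4*((c-b)*(d-a)*Real.sinh (2*lam*(b-a))*Real.sinh (2*lam*(d-c)))) := by
    have e1 : (b-a)*(d-c)*(E4-E1)*(E3-E2) - (c-b)*(d-a)*(E2-E1)*(E4-E3)
        = (b-a)*(d-c)*((E1-E4)*(E2-E3)) - (c-b)*(d-a)*((E1-E2)*(E3-E4)) := by ring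
    rw [e1, h14, h23, h12, h34]
    linear_combination (-(4*(c-b)*(d-a)*Real.sinh (2*lam*(b-a))*Real.sinh (2*lam*(d-c)))) * hG
  -- positivity of the bracket via the core sinh inequality
  have hcs := core_scaled hlam (by linarith : (0:ℝ) < b-a) (by linarith : (0:ℝ) < c-b)
    (by linarith : (0:ℝ) < d-c)
  rw [show (b-a) + (c-b) + (d-c) = d-a from by ring] at hcs
  have hbracket : 0 < 4*((b-a)*(d-c)*Real.sinh (2*lam*(d-a))*Real.sinh (2*lam*(c-b)))
      - 4*((c-b)*(d-a)*Real.sinh (2*lam*(b-a))*Real.sinh (2*lam*(d-c))) := by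
    linarith [hcs]
  have hdetpos : 0 < Matrix.det !![1, a, psi lam a, a * psi lam a;
                      1, b, psi lam b, b * psi lam b;
                      1, c, psi lam c, c * psi lam c;
                      1, d, psi lam d, d * psi lam d] := by
    rw [hdet, hfac]
    apply div_pos
    · exact mul_pos (mul_pos (Real.exp_pos _) (Real.exp_pos _)) hbracket
    · positivity
  refine ⟨hdetpos, ?_⟩
  -- affine independence
  have hdT : Matrix.det (Matrix.transpose !![1, a, psi lam a, a * psi lam a;
                      1, b, psi lam b, b * psi lam b;
                      1, c, psi lam c, c * psi lam c;
                      1, d, psi lam d, d * psi lam d]) ≠ 0 := by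
    rw [Matrix.det_transpose]; exact ne_of_gt hdetpos
  rw [affineIndependent_iff_of_fintype]
  intro w hw hv
  rw [Finset.weightedVSub_eq_linear_combination _ hw] at hv
  simp only [Fin.sum_univ_four, Matrix.cons_val_zero, Matrix.cons_val_one, Matrix.head_cons,
    Matrix.cons_val_two, Matrix.tail_cons, Matrix.cons_val_three] at hv
  rw [Fin.sum_univ_four] at hw
  simp only [vpoint, Prod.smul_mk, smul_eq_mul, Prod.mk_add_mk, Prod.mk_eq_zero] at hv
  obtain ⟨hv1, hv2, hv3⟩ := hv
  have hmul : (Matrix.transpose !![1, a, psi lam a, a * psi lam a;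
                      1, b, psi lam b, b * psi lam b;
                      1, c, psi lam c, c * psi lam c;
                      1, d, psi lam d, d * psi lam d]).mulVec w = 0 := by
    funext i
    fin_cases i <;>
      simp [Matrix.mulVec, dotProduct, Fin.sum_univ_four, Matrix.transpose_apply] <;>
      linarith [hw, hv1, hv2, hv3]
  have hw0 := Matrix.eq_zero_of_mulVec_eq_zero hdT hmul
  intro i
  exact congrFun hw0 i
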